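/- Let $\nu \in L^1_{loc}(\mathbb{R}^n)$, $\nu \ge 0$, and let $Q \subset \mathbb{R}^n$ be a cube with $\fint_Q \nu = 1$. Fix $\Lambda > 1$ and let $\{Q_j\}_j$ be the maximal dyadic subcubes of $Q$ such that either (a) $\fint_{Q_j} \nu > \Lambda$, or (b) $\fint_{Q_j} \nu < \Lambda^{-1}$. Then: (i) the cubes of type (a) satisfy $\sum_{(a)} |Q_j| \le \Lambda^{-1} |Q|$; (ii) the cubes of type (b) satisfy $\sum_{(b)} \nu(Q_j) \le \Lambda^{-1} \nu(Q)$; (iii) for every point $(x,t)$ in the sawtooth region $E_Q := (Q \times (0,\ell(Q))) \setminus \bigcup_j (Q_j \times (0, \ell(Q_j)))$, with $x$ not belonging to any $Q_j$ or with $t \ge \ell(Q_j)$ for the $Q_j$ containing $x$, the dyadic cube $Q' \in \mathbb{D}(Q)$ containing $x$ of side length comparable to $t$ that is not strictly contained in any $Q_j$ satisfies $\Lambda^{-1} \le \fint_{Q'} \nu \le \Lambda$. -/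

import Mathlib

open MeasureTheory ENNReal

/-- The dyadic subcube of generation `k` and index `m` of the half-open cube
with corner `c` and side length `ℓ`. -/
def dySub (n : ℕ) (c : Fin n → ℝ) (ℓ : ℝ) (k : ℕ) (m : Fin n → ℕ) :
    Set (Fin n → ℝ) :=
  {y | ∀ i, c i + ℓ * (m i : ℝ) / 2 ^ k ≤ y i ∧ y i < c i + ℓ * ((m i : ℝ) + 1) / 2 ^ k}

lemma dySub_eq_pi (n : ℕ) (c : Fin n → ℝ) (ℓ : ℝ) (k : ℕ) (m : Fin n → ℕ) :
    dySub n c ℓ k m = Set.pi Set.univ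
      (fun i => Set.Ico (c i + ℓ * (m i : ℝ) / 2 ^ k) (c i + ℓ * ((m i : ℝ) + 1) / 2 ^ k)) := by
  ext y
  simp [dySub, Set.mem_pi, Set.mem_Ico]

lemma dySub_meas (n : ℕ) (c : Fin n → ℝ) (ℓ : ℝ) (k : ℕ) (m : Fin n → ℕ) :
    MeasurableSet (dySub n c ℓ k m) := by
  rw [dySub_eq_pi]
  exact MeasurableSet.univ_pi fun i => measurableSet_Ico

lemma dySub_volume (n : ℕ) (c : Fin n → ℝ) (ℓ : ℝ) (hℓ : 0 < ℓ) (k : ℕ) (m : Fin n → ℕ) :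
    volume (dySub n c ℓ k m) = ENNReal.ofReal ((ℓ / 2 ^ k) ^ n) := by
  have hpos : (0:ℝ) < ℓ / 2 ^ k := by positivity
  rw [dySub_eq_pi, volume_pi_pi]
  have h : ∀ i : Fin n, volume (Set.Ico (c i + ℓ * (m i : ℝ) / 2 ^ k)
      (c i + ℓ * ((m i : ℝ) + 1) / 2 ^ k)) = ENNReal.ofReal (ℓ / 2 ^ k) := by
    intro i
    rw [Real.volume_Ico]
    congr 1
    ring
  simp only [h, Finset.prod_const, Finset.card_univ, Fintype.card_fin]
  rw [← ENNReal.ofReal_pow hpos.le]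

lemma dySub_subset (n : ℕ) (c : Fin n → ℝ) (ℓ : ℝ) (hℓ : 0 < ℓ) (k : ℕ) (m : Fin n → ℕ)
    (hm : ∀ i, m i < 2 ^ k) :
    dySub n c ℓ k m ⊆ dySub n c ℓ 0 (fun _ => 0) := by
  intro y hy i
  have h := hy i
  have h2k : (0:ℝ) < 2 ^ k := by positivity
  have hmle : (m i : ℝ) + 1 ≤ 2 ^ k := by exact_mod_cast hm i
  simp only [Nat.cast_zero, pow_zero, mul_zero, zero_div, add_zero, zero_add, mul_one, div_one]
  constructor
  · have : (0:ℝ) ≤ ℓ * (m i : ℝ) / 2 ^ k := by positivity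
    linarith [h.1]
  · have : ℓ * ((m i : ℝ) + 1) / 2 ^ k ≤ ℓ := by
      rw [div_le_iff₀ h2k]
      nlinarith
    linarith [h.2]

/-- The stopping-time construction for a weight `ν` with `⨍_Q ν = 1`:
the maximal dyadic subcubes where the average exceeds `Λ` have small total
Lebesgue measure, those where it drops below `Λ⁻¹` have small total `ν`-mass,
and every dyadic subcube not contained in a stopping cube has average between
`Λ⁻¹` and `Λ`. -/
theorem stmt_19 (n : ℕ) (hn : 0 < n) (c : Fin n → ℝ) (ℓ : ℝ) (hℓ : 0 < ℓ)
    (ν : (Fin n → ℝ) → ℝ) (hνmeas : Measurable ν) (hνnn : ∀ x, 0 ≤ ν x)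
    (hνint : IntegrableOn ν (dySub n c ℓ 0 fun _ => 0))
    (hnorm : (⨍ x in dySub n c ℓ 0 fun _ => 0, ν x) = 1)
    (Λ : ℝ) (hΛ : 1 < Λ)
    (sel : Set (ℕ × (Fin n → ℕ)))
    (hvalid : ∀ j ∈ sel, ∀ i, j.2 i < 2 ^ j.1)
    (hdisj : sel.Pairwise fun j j' =>
      Disjoint (dySub n c ℓ j.1 j.2) (dySub n c ℓ j'.1 j'.2))
    (hstop : ∀ j ∈ sel,
      Λ < (⨍ x in dySub n c ℓ j.1 j.2, ν x) ∨ (⨍ x in dySub n c ℓ j.1 j.2, ν x) < Λ⁻¹)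
    (hmax : ∀ (k : ℕ) (m : Fin n → ℕ), (∀ i, m i < 2 ^ k) →
      (Λ < (⨍ x in dySub n c ℓ k m, ν x) ∨ (⨍ x in dySub n c ℓ k m, ν x) < Λ⁻¹) →
      ∃ j ∈ sel, dySub n c ℓ k m ⊆ dySub n c ℓ j.1 j.2) :
    (volume (⋃ j ∈ {j ∈ sel | Λ < ⨍ x in dySub n c ℓ j.1 j.2, ν x},
        dySub n c ℓ j.1 j.2)).toReal ≤ Λ⁻¹ * ℓ ^ n ∧
    (∫ x in ⋃ j ∈ {j ∈ sel | (⨍ x in dySub n c ℓ j.1 j.2, ν x) < Λ⁻¹},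
        dySub n c ℓ j.1 j.2, ν x) ≤
      Λ⁻¹ * ∫ x in dySub n c ℓ 0 fun _ => 0, ν x ∧
    ∀ (k : ℕ) (m : Fin n → ℕ), (∀ i, m i < 2 ^ k) →
      (∀ j ∈ sel, ¬dySub n c ℓ k m ⊆ dySub n c ℓ j.1 j.2) →
      Λ⁻¹ ≤ (⨍ x in dySub n c ℓ k m, ν x) ∧ (⨍ x in dySub n c ℓ k m, ν x) ≤ Λ := by
  have hΛ0 : (0:ℝ) < Λ := lt_trans one_pos hΛ
  have hℓn : (0:ℝ) < ℓ ^ n := pow_pos hℓ n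
  set Q : Set (Fin n → ℝ) := dySub n c ℓ 0 (fun _ => 0) with hQdef
  have hQvol : volume Q = ENNReal.ofReal (ℓ ^ n) := by
    rw [hQdef, dySub_volume n c ℓ hℓ 0 (fun _ => 0)]
    norm_num
  have hQvolR : (volume Q).toReal = ℓ ^ n := by
    rw [hQvol, ENNReal.toReal_ofReal hℓn.le]
  -- the total integral over Q is ℓ^n
  have hintQ : ∫ x in Q, ν x = ℓ ^ n := by
    have h := setAverage_eq (μ := volume) ν Q
    rw [hnorm, measureReal_def, hQvolR] at h
    have h2 : (ℓ ^ n)⁻¹ * ∫ x in Q, ν x = 1 := h.symm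
    field_simp at h2
    linarith
  -- per-cube facts
  have hsubQ : ∀ j ∈ sel, dySub n c ℓ j.1 j.2 ⊆ Q := fun j hj =>
    dySub_subset n c ℓ hℓ j.1 j.2 (hvalid j hj)
  have hvolj : ∀ j : ℕ × (Fin n → ℕ),
      volume (dySub n c ℓ j.1 j.2) = ENNReal.ofReal ((ℓ / 2 ^ j.1) ^ n) := fun j =>
    dySub_volume n c ℓ hℓ j.1 j.2
  have hvoljR : ∀ j : ℕ × (Fin n → ℕ),
      (volume (dySub n c ℓ j.1 j.2)).toReal = (ℓ / 2 ^ j.1) ^ n := by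
    intro j
    rw [hvolj j, ENNReal.toReal_ofReal (by positivity)]
  have hvoljpos : ∀ j : ℕ × (Fin n → ℕ), (0:ℝ) < (ℓ / 2 ^ j.1) ^ n := by
    intro j; positivity
  have hintj : ∀ j ∈ sel, IntegrableOn ν (dySub n c ℓ j.1 j.2) := fun j hj =>
    hνint.mono_set (hsubQ j hj)
  -- the integral of ν over a cube in terms of the average
  have hintavg : ∀ j : ℕ × (Fin n → ℕ), ∫ x in dySub n c ℓ j.1 j.2, ν x =
      (ℓ / 2 ^ j.1) ^ n * ⨍ x in dySub n c ℓ j.1 j.2, ν x := by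
    intro j
    have h := setAverage_eq (μ := volume) ν (dySub n c ℓ j.1 j.2)
    rw [measureReal_def, hvoljR j] at h
    rw [h, smul_eq_mul, ← mul_assoc, mul_inv_cancel₀ (hvoljpos j).ne', one_mul]
  -- ofReal of set integrals equal lintegrals
  have hlint : ∀ s : Set (Fin n → ℝ), IntegrableOn ν s →
      ENNReal.ofReal (∫ x in s, ν x) = ∫⁻ x in s, ENNReal.ofReal (ν x) := by
    intro s hs
    exact ofReal_integral_eq_lintegral_ofReal hs
      (Filter.Eventually.of_forall fun x => hνnn x)
  have hlintQ : ∫⁻ x in Q, ENNReal.ofReal (ν x) = ENNReal.ofReal (ℓ ^ n) := by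
    rw [← hlint Q hνint, hintQ]
  refine ⟨?_, ?_, ?_⟩
  · -- (i) cubes with big average
    set A : Set (ℕ × (Fin n → ℕ)) := {j ∈ sel | Λ < ⨍ x in dySub n c ℓ j.1 j.2, ν x} with hAdef
    have hAsub : A ⊆ sel := Set.sep_subset _ _
    have hAc : A.Countable := Set.to_countable A
    have hApd : A.PairwiseDisjoint (fun j => dySub n c ℓ j.1 j.2) := hdisj.mono hAsub
    set U : Set (Fin n → ℝ) := ⋃ j ∈ A, dySub n c ℓ j.1 j.2 with hUdef
    have hUQ : U ⊆ Q := Set.iUnion₂_subset fun j hj => hsubQ j (hAsub hj)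
    have hmeasU : volume U = ∑' j : A, volume (dySub n c ℓ (j : ℕ × (Fin n → ℕ)).1 j.1.2) :=
      measure_biUnion hAc hApd (fun j _ => dySub_meas n c ℓ j.1 j.2)
    have hlintU : ∫⁻ x in U, ENNReal.ofReal (ν x) =
        ∑' j : A, ∫⁻ x in dySub n c ℓ (j : ℕ × (Fin n → ℕ)).1 j.1.2, ENNReal.ofReal (ν x) :=
      lintegral_biUnion hAc (fun j _ => dySub_meas n c ℓ j.1 j.2) hApd _
    -- per-cube estimate
    have hper : ∀ j : A, ENNReal.ofReal Λ *
        volume (dySub n c ℓ (j : ℕ × (Fin n → ℕ)).1 j.1.2) ≤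
        ∫⁻ x in dySub n c ℓ (j : ℕ × (Fin n → ℕ)).1 j.1.2, ENNReal.ofReal (ν x) := by
      rintro ⟨j, hjsel, hjavg⟩
      have hle : Λ * (ℓ / 2 ^ j.1) ^ n ≤ ∫ x in dySub n c ℓ j.1 j.2, ν x := by
        rw [hintavg j]
        nlinarith [hvoljpos j]
      calc ENNReal.ofReal Λ * volume (dySub n c ℓ j.1 j.2)
          = ENNReal.ofReal (Λ * (ℓ / 2 ^ j.1) ^ n) := by
            rw [hvolj j, ← ENNReal.ofReal_mul hΛ0.le]
        _ ≤ ENNReal.ofReal (∫ x in dySub n c ℓ j.1 j.2, ν x) :=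
            ENNReal.ofReal_le_ofReal hle
        _ = ∫⁻ x in dySub n c ℓ j.1 j.2, ENNReal.ofReal (ν x) :=
            hlint _ (hintj j hjsel)
    have hchain : ENNReal.ofReal Λ * volume U ≤ ENNReal.ofReal (ℓ ^ n) := by
      calc ENNReal.ofReal Λ * volume U
          = ∑' j : A, ENNReal.ofReal Λ *
              volume (dySub n c ℓ (j : ℕ × (Fin n → ℕ)).1 j.1.2) := by
            rw [hmeasU, ENNReal.tsum_mul_left]
        _ ≤ ∑' j : A, ∫⁻ x in dySub n c ℓ (j : ℕ × (Fin n → ℕ)).1 j.1.2,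
              ENNReal.ofReal (ν x) := ENNReal.tsum_le_tsum hper
        _ = ∫⁻ x in U, ENNReal.ofReal (ν x) := hlintU.symm
        _ ≤ ∫⁻ x in Q, ENNReal.ofReal (ν x) := lintegral_mono_set hUQ
        _ = ENNReal.ofReal (ℓ ^ n) := hlintQ
    have hUfin : volume U ≠ ⊤ :=
      ne_top_of_le_ne_top (by rw [hQvol]; exact ENNReal.ofReal_ne_top) (measure_mono hUQ)
    have hreal : Λ * (volume U).toReal ≤ ℓ ^ n := by
      have ht := ENNReal.toReal_mono ENNReal.ofReal_ne_top hchain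
      rwa [ENNReal.toReal_mul, ENNReal.toReal_ofReal hΛ0.le,
        ENNReal.toReal_ofReal hℓn.le] at ht
    have hfinal := mul_le_mul_of_nonneg_left hreal (inv_nonneg.mpr hΛ0.le)
    rwa [← mul_assoc, inv_mul_cancel₀ hΛ0.ne', one_mul] at hfinal
  · -- (ii) cubes with small average
    set B : Set (ℕ × (Fin n → ℕ)) :=
      {j ∈ sel | (⨍ x in dySub n c ℓ j.1 j.2, ν x) < Λ⁻¹} with hBdef
    have hBsub : B ⊆ sel := Set.sep_subset _ _
    have hBc : B.Countable := Set.to_countable B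
    have hBpd : B.PairwiseDisjoint (fun j => dySub n c ℓ j.1 j.2) := hdisj.mono hBsub
    set U : Set (Fin n → ℝ) := ⋃ j ∈ B, dySub n c ℓ j.1 j.2 with hUdef
    have hUQ : U ⊆ Q := Set.iUnion₂_subset fun j hj => hsubQ j (hBsub hj)
    have hUint : IntegrableOn ν U := hνint.mono_set hUQ
    have hmeasU : volume U = ∑' j : B, volume (dySub n c ℓ (j : ℕ × (Fin n → ℕ)).1 j.1.2) :=
      measure_biUnion hBc hBpd (fun j _ => dySub_meas n c ℓ j.1 j.2)
    have hlintU : ∫⁻ x in U, ENNReal.ofReal (ν x) =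
        ∑' j : B, ∫⁻ x in dySub n c ℓ (j : ℕ × (Fin n → ℕ)).1 j.1.2, ENNReal.ofReal (ν x) :=
      lintegral_biUnion hBc (fun j _ => dySub_meas n c ℓ j.1 j.2) hBpd _
    have hper : ∀ j : B, ∫⁻ x in dySub n c ℓ (j : ℕ × (Fin n → ℕ)).1 j.1.2,
        ENNReal.ofReal (ν x) ≤
        ENNReal.ofReal Λ⁻¹ * volume (dySub n c ℓ (j : ℕ × (Fin n → ℕ)).1 j.1.2) := by
      rintro ⟨j, hjsel, hjavg⟩
      have hle : ∫ x in dySub n c ℓ j.1 j.2, ν x ≤ Λ⁻¹ * (ℓ / 2 ^ j.1) ^ n := by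
        rw [hintavg j]
        nlinarith [hvoljpos j]
      calc ∫⁻ x in dySub n c ℓ j.1 j.2, ENNReal.ofReal (ν x)
          = ENNReal.ofReal (∫ x in dySub n c ℓ j.1 j.2, ν x) := (hlint _ (hintj j hjsel)).symm
        _ ≤ ENNReal.ofReal (Λ⁻¹ * (ℓ / 2 ^ j.1) ^ n) := ENNReal.ofReal_le_ofReal hle
        _ = ENNReal.ofReal Λ⁻¹ * volume (dySub n c ℓ j.1 j.2) := by
            rw [hvolj j, ← ENNReal.ofReal_mul (inv_nonneg.mpr hΛ0.le)]
    have hchain : ENNReal.ofReal (∫ x in U, ν x) ≤ ENNReal.ofReal (Λ⁻¹ * ℓ ^ n) := by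
      calc ENNReal.ofReal (∫ x in U, ν x)
          = ∫⁻ x in U, ENNReal.ofReal (ν x) := hlint U hUint
        _ = ∑' j : B, ∫⁻ x in dySub n c ℓ (j : ℕ × (Fin n → ℕ)).1 j.1.2,
              ENNReal.ofReal (ν x) := hlintU
        _ ≤ ∑' j : B, ENNReal.ofReal Λ⁻¹ *
              volume (dySub n c ℓ (j : ℕ × (Fin n → ℕ)).1 j.1.2) := ENNReal.tsum_le_tsum hper
        _ = ENNReal.ofReal Λ⁻¹ * volume U := by rw [hmeasU, ENNReal.tsum_mul_left]
        _ ≤ ENNReal.ofReal Λ⁻¹ * volume Q :=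
            mul_le_mul_right (measure_mono hUQ) _
        _ = ENNReal.ofReal (Λ⁻¹ * ℓ ^ n) := by
            rw [hQvol, ← ENNReal.ofReal_mul (inv_nonneg.mpr hΛ0.le)]
    have : (∫ x in U, ν x) ≤ Λ⁻¹ * ℓ ^ n :=
      (ENNReal.ofReal_le_ofReal_iff (by positivity)).mp hchain
    rw [hintQ]
    exact this
  · -- (iii)
    intro k m hm hnot
    by_contra hcon
    push_neg at hcon
    have hd : Λ < (⨍ x in dySub n c ℓ k m, ν x) ∨ (⨍ x in dySub n c ℓ k m, ν x) < Λ⁻¹ := by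
      rcases lt_or_ge (⨍ x in dySub n c ℓ k m, ν x) Λ⁻¹ with h | h
      · exact Or.inr h
      · exact Or.inl (hcon h)
    obtain ⟨j, hj, hsub⟩ := hmax k m hm hd
    exact hnot j hj hsub
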